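/- (Theorem 3: Bertrand mates) Let α : ℝ → ℝ³ be a twice continuously differentiable unit-speed curve with unit tangent T(s) = α′(s), curvature κ(s) = ‖α″(s)‖ > 0, principal normal N(s) = α″(s)/κ(s), and binormal B(s) = T(s) × N(s). Let θ ∈ ℝ with sin θ > 0, and suppose a ∈ ℝ³ satisfies a = cos θ · T(s) + sin θ · B(s) for all s. For s₀ ∈ ℝ define ᾱ(s) = α(s₀) + sin θ · α(s) + (s − s₀) cos θ · a, and let T̄(s) = ᾱ′(s)/‖ᾱ′(s)‖, B̄(s) = (ᾱ′(s) × ᾱ″(s))/‖ᾱ′(s) × ᾱ″(s)‖, N̄(s) = B̄(s) × T̄(s). Then for every s, N̄(s) = N(s); in particular the principal normal vectors of ᾱ and α are linearly dependent at every point, i.e. ᾱ and α are Bertrand mates. -/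

import Mathlib

open Real

noncomputable def cross3 (u v : EuclideanSpace ℝ (Fin 3)) : EuclideanSpace ℝ (Fin 3) :=
  WithLp.toLp 2 ![u 1 * v 2 - u 2 * v 1, u 2 * v 0 - u 0 * v 2, u 0 * v 1 - u 1 * v 0]

open RealInnerProductSpace in
lemma bm_inner_eq (x y : EuclideanSpace ℝ (Fin 3)) :
    ⟪x, y⟫ = x 0 * y 0 + x 1 * y 1 + x 2 * y 2 := by
  simp [PiLp.inner_apply, Fin.sum_univ_three, RCLike.inner_apply, mul_comm]

lemma bm_cross3_smul_left (r : ℝ) (x y : EuclideanSpace ℝ (Fin 3)) :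
    cross3 (r • x) y = r • cross3 x y := by
  ext i
  fin_cases i <;>
    simp [cross3, PiLp.smul_apply, smul_eq_mul] <;> ring

lemma bm_cross3_smul_right (r : ℝ) (x y : EuclideanSpace ℝ (Fin 3)) :
    cross3 x (r • y) = r • cross3 x y := by
  ext i
  fin_cases i <;>
    simp [cross3, PiLp.smul_apply, smul_eq_mul] <;> ring

open RealInnerProductSpace in
lemma bm_cross3_triple (x y z : EuclideanSpace ℝ (Fin 3)) :
    cross3 (cross3 x y) z = ⟪x, z⟫ • y - ⟪y, z⟫ • x := by
  ext i
  fin_cases i <;>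
    simp [cross3, bm_inner_eq, Fin.sum_univ_three, PiLp.smul_apply, PiLp.sub_apply,
      smul_eq_mul] <;> ring

open RealInnerProductSpace in
lemma bm_cross3_lagrange (x y : EuclideanSpace ℝ (Fin 3)) :
    ⟪cross3 x y, cross3 x y⟫ = ⟪x, x⟫ * ⟪y, y⟫ - ⟪x, y⟫ ^ 2 := by
  rw [bm_inner_eq, bm_inner_eq, bm_inner_eq, bm_inner_eq]; simp [cross3]; ring

open RealInnerProductSpace in
lemma bm_inner_self_cross (x y : EuclideanSpace ℝ (Fin 3)) : ⟪x, cross3 x y⟫ = 0 := by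
  simp [cross3, bm_inner_eq, Fin.sum_univ_three]; ring

open RealInnerProductSpace in
lemma bm_inner_cross_self (x y : EuclideanSpace ℝ (Fin 3)) : ⟪y, cross3 x y⟫ = 0 := by
  simp [cross3, bm_inner_eq, Fin.sum_univ_three]; ring

open RealInnerProductSpace in
lemma bm_key (t n : EuclideanSpace ℝ (Fin 3))
    (htt : ⟪t, t⟫ = 1) (hnn : ⟪n, n⟫ = 1) (htn : ⟪t, n⟫ = 0)
    (c1 c2 k : ℝ) (hk : 0 < k) (hD : 0 < c1 ^ 2 + c2 ^ 2) :
    cross3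
      (‖cross3 (c1 • t + c2 • cross3 t n) (k • n)‖⁻¹ •
        cross3 (c1 • t + c2 • cross3 t n) (k • n))
      (‖(c1 • t + c2 • cross3 t n)‖⁻¹ • (c1 • t + c2 • cross3 t n)) = n := by
  set D := c1 ^ 2 + c2 ^ 2 with hDdef
  set v := c1 • t + c2 • cross3 t n with hv
  set u := k • n with hu
  have hnt : ⟪n, t⟫ = 0 := by rw [real_inner_comm]; exact htn
  have hcv : ⟪cross3 t n, v⟫ = c2 * (1 - 0 ^ 2) := by
    rw [hv, inner_add_right, real_inner_smul_right, real_inner_smul_right,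
      real_inner_comm t (cross3 t n), bm_inner_self_cross, bm_cross3_lagrange, htt, hnn, htn]
    ring
  have hvv : ⟪v, v⟫ = D := by
    rw [hv, inner_add_left, real_inner_smul_left, real_inner_smul_left, ← hv, hcv,
      hv, inner_add_right, real_inner_smul_right, real_inner_smul_right, htt,
      bm_inner_self_cross]
    ring
  have huv : ⟪u, v⟫ = 0 := by
    rw [hu, real_inner_smul_left, hv, inner_add_right, real_inner_smul_right,
      real_inner_smul_right, hnt, bm_inner_cross_self]
    ring
  have hvu : ⟪v, u⟫ = 0 := by rw [real_inner_comm]; exact huv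
  have huu : ⟪u, u⟫ = k ^ 2 := by
    rw [hu, real_inner_smul_left, real_inner_smul_right, hnn]; ring
  set w := cross3 v u with hw
  have hww : ⟪w, w⟫ = D * k ^ 2 := by
    rw [hw, bm_cross3_lagrange, hvv, huu, hvu]; ring
  have hnv : ‖v‖ ^ 2 = D := by rw [← real_inner_self_eq_norm_sq]; exact hvv
  have hnw : ‖w‖ ^ 2 = D * k ^ 2 := by rw [← real_inner_self_eq_norm_sq]; exact hww
  have hkD : 0 < k * D := mul_pos hk hD
  have hprod : ‖w‖ * ‖v‖ = k * D := by
    have h1 : (‖w‖ * ‖v‖) ^ 2 = (k * D) ^ 2 := by rw [mul_pow, hnv, hnw]; ring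
    have h2 : 0 ≤ ‖w‖ * ‖v‖ := mul_nonneg (norm_nonneg _) (norm_nonneg _)
    calc ‖w‖ * ‖v‖ = √((‖w‖ * ‖v‖) ^ 2) := (Real.sqrt_sq h2).symm
      _ = √((k * D) ^ 2) := by rw [h1]
      _ = k * D := Real.sqrt_sq hkD.le
  have hwv : cross3 w v = (D * k) • n := by
    rw [hw, bm_cross3_triple, hvv, huv, hu, smul_smul, zero_smul, sub_zero]
  rw [bm_cross3_smul_left, bm_cross3_smul_right, hwv, smul_smul, smul_smul]
  have hne : ‖w‖ * ‖v‖ ≠ 0 := by rw [hprod]; exact hkD.ne'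
  have : ‖w‖⁻¹ * ‖v‖⁻¹ * (D * k) = 1 := by
    rw [← mul_inv, hprod]; field_simp
  rw [this, one_smul]

theorem associated_curve_bertrand_mate
    (α : ℝ → EuclideanSpace ℝ (Fin 3))
    (hα : ContDiff ℝ 2 α)
    (T N B : ℝ → EuclideanSpace ℝ (Fin 3)) (κ : ℝ → ℝ)
    (hT : ∀ s, T s = deriv α s)
    (hunit : ∀ s, ‖deriv α s‖ = 1)
    (hκ : ∀ s, κ s = ‖deriv (deriv α) s‖)
    (hκpos : ∀ s, 0 < κ s)
    (hN : ∀ s, N s = (κ s)⁻¹ • deriv (deriv α) s)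
    (hB : ∀ s, B s = cross3 (T s) (N s))
    (θ : ℝ) (hθ : 0 < Real.sin θ)
    (a : EuclideanSpace ℝ (Fin 3))
    (ha : ∀ s, a = Real.cos θ • T s + Real.sin θ • B s)
    (s₀ : ℝ)
    (ᾱ : ℝ → EuclideanSpace ℝ (Fin 3))
    (hᾱ : ∀ s, ᾱ s = α s₀ + Real.sin θ • α s + ((s - s₀) * Real.cos θ) • a)
    (T' B' N' : ℝ → EuclideanSpace ℝ (Fin 3))
    (hT' : ∀ s, T' s = ‖deriv ᾱ s‖⁻¹ • deriv ᾱ s)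
    (hB' : ∀ s, B' s = ‖cross3 (deriv ᾱ s) (deriv (deriv ᾱ) s)‖⁻¹ •
        cross3 (deriv ᾱ s) (deriv (deriv ᾱ) s))
    (hN' : ∀ s, N' s = cross3 (B' s) (T' s)) :
    ∀ s, N' s = N s := by
  have hdiff : Differentiable ℝ α := hα.differentiable (by norm_num)
  have h2 : ContDiff ℝ ((1 : WithTop ℕ∞) + 1) α := by norm_num at hα ⊢; exact hα
  have hdiff' : Differentiable ℝ (deriv α) :=
    ((contDiff_succ_iff_deriv.mp h2).2.2).differentiable one_ne_zero
  have hᾱfun : ᾱ = fun s => α s₀ + Real.sin θ • α s + ((s - s₀) * Real.cos θ) • a :=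
    funext hᾱ
  -- first derivative of ᾱ
  have hd1 : ∀ s, HasDerivAt ᾱ (Real.sin θ • deriv α s + Real.cos θ • a) s := by
    intro s
    rw [hᾱfun]
    have h1 : HasDerivAt (fun s => Real.sin θ • α s) (Real.sin θ • deriv α s) s :=
      ((hdiff s).hasDerivAt).const_smul (Real.sin θ)
    have h2 : HasDerivAt (fun s : ℝ => ((s - s₀) * Real.cos θ) • a)
        ((1 * Real.cos θ) • a) s :=
      (((hasDerivAt_id s).sub_const s₀).mul_const _).smul_const a
    have h3 := ((h1.const_add (α s₀)).add h2); simp only [one_mul] at h3; exact h3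
  have hderiv1 : deriv ᾱ = fun s => Real.sin θ • deriv α s + Real.cos θ • a :=
    funext fun s => (hd1 s).deriv
  -- second derivative of ᾱ
  have hderiv2 : ∀ s, deriv (deriv ᾱ) s = Real.sin θ • deriv (deriv α) s := by
    intro s
    rw [hderiv1]
    exact (((hdiff' s).hasDerivAt.const_smul (Real.sin θ)).add_const (Real.cos θ • a)).deriv
  -- orthogonality of α' and α''
  have horth : ∀ s, (inner ℝ (deriv α s) (deriv (deriv α) s) : ℝ) = 0 := by
    intro s
    have hg : ∀ u, (inner ℝ (deriv α u) (deriv α u) : ℝ) = 1 := by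
      intro u
      rw [real_inner_self_eq_norm_sq, hunit]; norm_num
    have h1 : HasDerivAt (fun u => (inner ℝ (deriv α u) (deriv α u) : ℝ))
        ((inner ℝ (deriv α s) (deriv (deriv α) s) : ℝ) +
          (inner ℝ (deriv (deriv α) s) (deriv α s) : ℝ)) s :=
      ((hdiff' s).hasDerivAt).inner ℝ ((hdiff' s).hasDerivAt)
    have h0 : HasDerivAt (fun u => (inner ℝ (deriv α u) (deriv α u) : ℝ)) 0 s := by
      have : (fun u => (inner ℝ (deriv α u) (deriv α u) : ℝ)) = fun _ => (1 : ℝ) :=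
        funext hg
      rw [this]; exact hasDerivAt_const s 1
    have huniq := h1.unique h0
    have hc : (inner ℝ (deriv α s) (deriv (deriv α) s) : ℝ) =
        inner ℝ (deriv (deriv α) s) (deriv α s) := real_inner_comm _ _
    linarith
  intro s
  set t := T s with ht
  set n := N s with hn
  have hκne : κ s ≠ 0 := (hκpos s).ne'
  have hα'' : deriv (deriv α) s = κ s • n := by
    rw [hn, hN, smul_smul, mul_inv_cancel₀ hκne, one_smul]
  have htt : (inner ℝ t t : ℝ) = 1 := by
    rw [ht, hT, real_inner_self_eq_norm_sq, hunit]; norm_num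
  have hnn : (inner ℝ n n : ℝ) = 1 := by
    rw [real_inner_self_eq_norm_sq, hn, hN, norm_smul]
    rw [← hκ s, Real.norm_eq_abs, abs_inv, abs_of_pos (hκpos s), inv_mul_cancel₀ hκne]
    norm_num
  have htn : (inner ℝ t n : ℝ) = 0 := by
    rw [ht, hn, hT, hN, real_inner_smul_right, horth, mul_zero]
  have hBs : B s = cross3 t n := by rw [hB]
  -- rewrite first derivative in the canonical form
  have hv : deriv ᾱ s =
      (Real.sin θ + Real.cos θ ^ 2) • t + (Real.cos θ * Real.sin θ) • cross3 t n := by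
    rw [hderiv1]
    show Real.sin θ • deriv α s + Real.cos θ • a = _
    rw [← hT, ← ht, ha s, ← ht, hBs]
    module
  have hu : deriv (deriv ᾱ) s = (Real.sin θ * κ s) • n := by
    rw [hderiv2, hα'', smul_smul]
  have hk : 0 < Real.sin θ * κ s := mul_pos hθ (hκpos s)
  have hD : 0 < (Real.sin θ + Real.cos θ ^ 2) ^ 2 + (Real.cos θ * Real.sin θ) ^ 2 := by
    nlinarith [hθ, sq_nonneg (Real.cos θ), mul_pos hθ hθ,
      mul_nonneg hθ.le (sq_nonneg (Real.cos θ)), sq_nonneg (Real.cos θ ^ 2)]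
  rw [hN' s, hB' s, hT' s, hv, hu, hn]
  exact bm_key t n htt hnn htn _ _ _ hk hD ▸ rfl
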